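/- Suppose the probability measure satisfies: for every admissible background B and all distinct individuals a, b not mentioned in B, pr(F_b ∧ ¬G_b | F_a ∧ G_a ∧ B) ≤ pr(F_b ∧ ¬G_b | B). Then for every background D consisting of complete descriptions of some individuals that do not falsify H, and every individual a not described by D (with D not determining F_a ∧ G_a or H), Nicod's condition holds: pr(H | F_a ∧ G_a ∧ D) > pr(H | D). -/

import Mathlib

open MeasureTheory ProbabilityTheory

/-- Complete description vectors: each individual is assigned whether it is `F`
(first component) and whether it is `G` (second component). -/
abbrev CDV (N : ℕ) := Fin N → Bool × Bool

/-- The event that individual `b` satisfies `F`. -/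
def Fev {N : ℕ} (b : Fin N) : Set (CDV N) := {ω | (ω b).1 = true}

/-- The event that individual `b` satisfies `G`. -/
def Gev {N : ℕ} (b : Fin N) : Set (CDV N) := {ω | (ω b).2 = true}

/-- The hypothesis `H`: every individual satisfying `F` also satisfies `G`. -/
def Hyp (N : ℕ) : Set (CDV N) := {ω | ∀ b : Fin N, (ω b).1 = true → (ω b).2 = true}

/-- The twelve single-individual predicates allowed in the class `Δ`
(`F`, `¬F`, `G`, `¬G`, the complete descriptions `F̄Ḡ`, `F̄G`, `FḠ`, `FG`,
their relevant negations including `F→G = ¬FḠ`), together with the trivial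
predicate (for undescribed individuals). -/
def allowedPreds : Set (Set (Bool × Bool)) :=
  { Set.univ,
    {p | p.1 = true}, {p | p.1 = false},
    {p | p.2 = true}, {p | p.2 = false},
    {p | p.1 = false ∧ p.2 = false}, {p | ¬(p.1 = false ∧ p.2 = false)},
    {p | p.1 = false ∧ p.2 = true}, {p | ¬(p.1 = false ∧ p.2 = true)},
    {p | p.1 = true ∧ p.2 = false},
    {p | p.1 = true → p.2 = true},
    {p | p.1 = true ∧ p.2 = true}, {p | ¬(p.1 = true ∧ p.2 = true)} }

/-- The class `Δ` of admissible backgrounds: conjunctions of allowed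
single-individual predicates, each about a distinct individual
(hence not linking properties of distinct individuals). -/
def IsDelta {N : ℕ} (D : Set (CDV N)) : Prop :=
  ∃ A : Fin N → Set (Bool × Bool),
    (∀ b, A b ∈ allowedPreds) ∧ D = {ω | ∀ b, ω b ∈ A b}

/-- The class `Δ` restricted to backgrounds mentioning only the individuals in `S`. -/
def IsDeltaOn {N : ℕ} (S : Finset (Fin N)) (B : Set (CDV N)) : Prop :=
  ∃ A : Fin N → Set (Bool × Bool),
    (∀ b, A b ∈ allowedPreds) ∧ (∀ b ∉ S, A b = Set.univ) ∧ B = {ω | ∀ b, ω b ∈ A b}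

namespace NicodAux
variable {N : ℕ}

lemma measAll (s : Set (CDV N)) : MeasurableSet s := s.to_countable.measurableSet

def Pimp (b : Fin N) : Set (CDV N) := {ω | (ω b).1 = true → (ω b).2 = true}

def Eimp (W : Finset (Fin N)) : Set (CDV N) := {ω | ∀ b ∈ W, (ω b).1 = true → (ω b).2 = true}

lemma imp_of_ne {p : Bool × Bool} (h : p ≠ (true, false)) : p.1 = true → p.2 = true := by
  rcases p with ⟨f, g⟩; cases f <;> cases g <;> simp_all

lemma cond_chain (μ : Measure (CDV N)) [IsFiniteMeasure μ] (X s t : Set (CDV N))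
    (hXs : μ (X ∩ s) ≠ 0) :
    μ[s ∩ t | X] = μ[t | X ∩ s] * μ[s | X] := by
  rw [cond_apply (measAll X), cond_apply (measAll _), cond_apply (measAll X), ← Set.inter_assoc]
  calc (μ X)⁻¹ * μ (X ∩ s ∩ t)
      = (μ X)⁻¹ * (((μ (X ∩ s))⁻¹ * μ (X ∩ s)) * μ (X ∩ s ∩ t)) := by
        rw [ENNReal.inv_mul_cancel hXs (measure_ne_top μ _), one_mul]
    _ = (μ (X ∩ s))⁻¹ * μ (X ∩ s ∩ t) * ((μ X)⁻¹ * μ (X ∩ s)) := by ring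

lemma cond_mono_of_compl (μ : Measure (CDV N)) [IsFiniteMeasure μ] {u v w : Set (CDV N)}
    (hv : μ v ≠ 0) (hw : μ w ≠ 0)
    (h : μ[uᶜ | v] ≤ μ[uᶜ | w]) : μ[u | w] ≤ μ[u | v] := by
  haveI := cond_isProbabilityMeasure (μ := μ) hv
  haveI := cond_isProbabilityMeasure (μ := μ) hw
  rw [prob_compl_eq_one_sub (measAll u), prob_compl_eq_one_sub (measAll u)] at h
  calc μ[u | w] = 1 - (1 - μ[u | w]) :=
        (ENNReal.sub_sub_cancel ENNReal.one_ne_top prob_le_one).symm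
    _ ≤ 1 - (1 - μ[u | v]) := tsub_le_tsub_left h 1
    _ = μ[u | v] := ENNReal.sub_sub_cancel ENNReal.one_ne_top prob_le_one

end NicodAux

open NicodAux

/-- Theorem 1: if `pr(F_b ∧ ¬G_b | F_a ∧ G_a ∧ B) ≤ pr(F_b ∧ ¬G_b | B)` for
every admissible background `B` and all distinct individuals `a, b` not mentioned in `B`,
then Nicod's condition holds relative to every background `D ∈ δ` (a conjunction of
complete descriptions not falsifying `H`) and every individual `a` not described by `D`. -/


theorem nicod_of_nonconfirmation_of_counterexamples {N : ℕ}
    (μ : Measure (CDV N)) [IsProbabilityMeasure μ]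
    -- Cournot's principle: contingent events have positive probability
    (hCournot : ∀ s : Set (CDV N), s.Nonempty → μ s ≠ 0)
    -- relation (9): FG_a does not confirm F¬G_b for unmentioned individuals
    (hyp : ∀ (S : Finset (Fin N)) (B : Set (CDV N)) (a b : Fin N),
      IsDeltaOn S B → a ∉ S → b ∉ S → a ≠ b →
      μ[Fev b ∩ (Gev b)ᶜ | (Fev a ∩ Gev a) ∩ B] ≤ μ[Fev b ∩ (Gev b)ᶜ | B])
    (T : Finset (Fin N)) (d : Fin N → Bool × Bool)
    -- D ∈ δ completely describes the individuals of T and does not falsify H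
    (hd : ∀ c ∈ T, d c ≠ (true, false))
    (D : Set (CDV N)) (hD : D = {ω | ∀ c ∈ T, ω c = d c})
    (a : Fin N) (ha : a ∉ T) :
    μ[Hyp N | (Fev a ∩ Gev a) ∩ D] > μ[Hyp N | D] := by
  classical
  set X : Set (CDV N) := (Fev a ∩ Gev a) ∩ D with hX
  -- witness point in everything except counterexample sets
  set ω₀ : CDV N := fun b => if b ∈ T then d b else (true, true) with hω₀
  have hω₀imp : ∀ b, (ω₀ b).1 = true → (ω₀ b).2 = true := by
    intro b
    by_cases hb : b ∈ T
    · simpa [hω₀, hb] using imp_of_ne (hd b hb)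
    · simp [hω₀, hb]
  have hω₀D : ω₀ ∈ D := by
    rw [hD]; intro c hc; simp [hω₀, hc]
  have hω₀FG : ω₀ ∈ Fev a ∩ Gev a := by
    constructor <;> simp [Fev, Gev, hω₀, ha]
  have hω₀E : ∀ W : Finset (Fin N), ω₀ ∈ Eimp W := fun W b _ => hω₀imp b
  have hpos : ∀ s : Set (CDV N), ω₀ ∈ s → μ s ≠ 0 := fun s hs => hCournot s ⟨ω₀, hs⟩
  -- backgrounds D ∩ Eimp W are admissible
  have hDelta : ∀ W : Finset (Fin N), (∀ b ∈ W, b ∉ T) →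
      IsDeltaOn (T ∪ W) (D ∩ Eimp W) := by
    intro W hW
    refine ⟨fun b => if b ∈ T then {q | q.1 = (d b).1 ∧ q.2 = (d b).2}
      else if b ∈ W then {q | q.1 = true → q.2 = true} else Set.univ, ?_, ?_, ?_⟩
    · intro b
      by_cases hb : b ∈ T
      · simp only [if_pos hb]
        have hne := hd b hb
        rcases hdb : d b with ⟨f, g⟩
        rw [hdb] at hne
        cases f <;> cases g <;> simp_all [allowedPreds]
      · by_cases hbW : b ∈ W <;> simp [hb, hbW, allowedPreds]
    · intro b hb
      rw [Finset.mem_union] at hb; push_neg at hb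
      simp [hb.1, hb.2]
    · ext ω
      simp only [hD, Set.mem_inter_iff, Set.mem_setOf_eq, Eimp]
      constructor
      · rintro ⟨h1, h2⟩ b
        by_cases hbT : b ∈ T
        · simp [hbT, h1 b hbT]
        · by_cases hbW : b ∈ W
          · simpa [hbT, hbW] using h2 b hbW
          · simp [hbT, hbW]
      · intro h
        constructor
        · intro c hc
          have := h c
          rw [if_pos hc] at this
          exact Prod.ext this.1 this.2
        · intro b hbW
          have := h b
          rwa [if_neg (hW b hbW), if_pos hbW] at this
  -- main induction
  have key : ∀ W : Finset (Fin N), (∀ b ∈ W, b ∉ T ∧ b ≠ a) →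
      μ[Eimp W | D] ≤ μ[Eimp W | X] := by
    intro W
    induction W using Finset.induction_on with
    | empty =>
      intro _
      have hE : Eimp (∅ : Finset (Fin N)) = Set.univ := by
        ext ω; simp [Eimp]
      haveI := cond_isProbabilityMeasure (μ := μ) (hpos D hω₀D)
      haveI := cond_isProbabilityMeasure (μ := μ) (hpos X ⟨hω₀FG, hω₀D⟩)
      rw [hE]
      simp
    | @insert c W' hc ih =>
      intro hins
      have hcT : c ∉ T := (hins c (Finset.mem_insert_self c W')).1
      have hca : c ≠ a := (hins c (Finset.mem_insert_self c W')).2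
      have hW' : ∀ b ∈ W', b ∉ T ∧ b ≠ a := fun b hb => hins b (Finset.mem_insert_of_mem hb)
      set B : Set (CDV N) := D ∩ Eimp W' with hB
      have hBdelta : IsDeltaOn (T ∪ W') B := hDelta W' (fun b hb => (hW' b hb).1)
      have haS : a ∉ T ∪ W' := by
        rw [Finset.mem_union]; rintro (h | h)
        · exact ha h
        · exact (hW' a h).2 rfl
      have hcS : c ∉ T ∪ W' := by
        rw [Finset.mem_union]; rintro (h | h)
        · exact hcT h
        · exact hc h
      have h9 := hyp (T ∪ W') B a c hBdelta haS hcS (fun h => hca h.symm)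
      have hcompl : Fev c ∩ (Gev c)ᶜ = (Pimp c)ᶜ := by
        ext ω; simp [Fev, Gev, Pimp]
      rw [hcompl] at h9
      have hmono : μ[Pimp c | B] ≤ μ[Pimp c | (Fev a ∩ Gev a) ∩ B] :=
        cond_mono_of_compl μ (hpos _ ⟨hω₀FG, hω₀D, hω₀E W'⟩) (hpos _ ⟨hω₀D, hω₀E W'⟩) h9
      have hEins : Eimp (insert c W') = Eimp W' ∩ Pimp c := by
        ext ω
        simp only [Eimp, Pimp, Set.mem_inter_iff, Set.mem_setOf_eq, Finset.mem_insert]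
        constructor
        · intro h
          exact ⟨fun b hb => h b (Or.inr hb), h c (Or.inl rfl)⟩
        · rintro ⟨h1, h2⟩ b hb
          rcases hb with rfl | hb
          · exact h2
          · exact h1 b hb
      have hXassoc : X ∩ Eimp W' = (Fev a ∩ Gev a) ∩ B := by
        rw [hX, hB, Set.inter_assoc]
      rw [hEins,
        cond_chain μ D (Eimp W') (Pimp c) (hpos _ ⟨hω₀D, hω₀E W'⟩),
        cond_chain μ X (Eimp W') (Pimp c) (hpos _ ⟨⟨hω₀FG, hω₀D⟩, hω₀E W'⟩),
        hXassoc]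
      exact mul_le_mul' hmono (ih hW')
  -- apply to all unmentioned individuals
  set W₀ : Finset (Fin N) := (insert a T)ᶜ with hW₀
  have hW₀mem : ∀ b ∈ W₀, b ∉ T ∧ b ≠ a := by
    intro b hb
    rw [hW₀, Finset.mem_compl, Finset.mem_insert] at hb
    push_neg at hb
    exact ⟨hb.2, hb.1⟩
  have hkey := key W₀ hW₀mem
  -- μ[Hyp | X] = μ[Eimp W₀ | X]
  have hHX : X ∩ Hyp N = X ∩ Eimp W₀ := by
    ext ω
    simp only [hX, Set.mem_inter_iff, Hyp, Eimp, Fev, Gev, Set.mem_setOf_eq]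
    constructor
    · rintro ⟨hfg, hh⟩
      exact ⟨hfg, fun b _ => hh b⟩
    · rintro ⟨⟨⟨hf, hg⟩, hωD⟩, he⟩
      refine ⟨⟨⟨hf, hg⟩, hωD⟩, fun b => ?_⟩
      by_cases hbW : b ∈ W₀
      · exact he b hbW
      · rw [hW₀, Finset.mem_compl, not_not, Finset.mem_insert] at hbW
        rcases hbW with rfl | hbT
        · intro _; exact hg
        · rw [hD] at hωD
          have := hωD b hbT
          rw [this]
          exact imp_of_ne (hd b hbT)
  have hcondHX : μ[Hyp N | X] = μ[Eimp W₀ | X] := by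
    rw [cond_apply (measAll X), cond_apply (measAll X), hHX]
  -- μ[Hyp | D] < μ[Eimp W₀ | D]
  have hHD : D ∩ Hyp N = (D ∩ Eimp W₀) ∩ Pimp a := by
    ext ω
    simp only [Set.mem_inter_iff, Hyp, Eimp, Pimp, Set.mem_setOf_eq]
    constructor
    · rintro ⟨hωD, hh⟩
      exact ⟨⟨hωD, fun b _ => hh b⟩, hh a⟩
    · rintro ⟨⟨hωD, he⟩, hpa⟩
      refine ⟨hωD, fun b => ?_⟩
      by_cases hbW : b ∈ W₀
      · exact he b hbW
      · rw [hW₀, Finset.mem_compl, not_not, Finset.mem_insert] at hbW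
        rcases hbW with rfl | hbT
        · exact hpa
        · rw [hD] at hωD
          rw [hωD b hbT]
          exact imp_of_ne (hd b hbT)
  -- witness for a counterexample at a
  set ω₁ : CDV N := fun b => if b ∈ T then d b else if b = a then (true, false) else (true, true)
    with hω₁
  have hω₁DE : ω₁ ∈ (D ∩ Eimp W₀) \ Pimp a := by
    refine ⟨⟨?_, ?_⟩, ?_⟩
    · rw [hD]; intro c hc; simp [hω₁, hc]
    · intro b hb
      rcases hW₀mem b hb with ⟨hbT, hba⟩
      simp [hω₁, hbT, hba]
    · simp [Pimp, hω₁, ha]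
  have hlt : μ ((D ∩ Eimp W₀) ∩ Pimp a) < μ (D ∩ Eimp W₀) := by
    have hsum := measure_inter_add_diff (μ := μ) (D ∩ Eimp W₀) (measAll (Pimp a))
    rw [← hsum]
    exact ENNReal.lt_add_right (measure_ne_top μ _) (hCournot _ ⟨ω₁, hω₁DE⟩)
  have hcondHD : μ[Hyp N | D] < μ[Eimp W₀ | D] := by
    rw [cond_apply (measAll D), cond_apply (measAll D), hHD]
    exact ENNReal.mul_lt_mul_right (ENNReal.inv_ne_zero.2 (measure_ne_top μ D))
      (ENNReal.inv_ne_top.2 (hpos D hω₀D)) hlt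
  calc μ[Hyp N | D] < μ[Eimp W₀ | D] := hcondHD
    _ ≤ μ[Eimp W₀ | X] := hkey
    _ = μ[Hyp N | X] := hcondHX.symm
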